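/- Let p be a continuously differentiable, strictly positive probability density on ℝ^d and f : ℝ^d → ℝ twice continuously differentiable. Assume the vector field p·∇f is integrable, its flux over spheres of radius R vanishes as R → ∞, and L_p f is integrable under p. Then E_{X∼p}[L_p f(X)] = 0. -/

import Mathlib

open MeasureTheory Real Finset Filter
open scoped ENNReal NNReal Topology

noncomputable section

def basisVec {d : ℕ} (i : Fin d) : EuclideanSpace ℝ (Fin d) := EuclideanSpace.single i 1

def pderiv' {d : ℕ} (i : Fin d) (f : EuclideanSpace ℝ (Fin d) → ℝ)
    (x : EuclideanSpace ℝ (Fin d)) : ℝ := fderiv ℝ f x (basisVec i)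

def laplacian' {d : ℕ} (f : EuclideanSpace ℝ (Fin d) → ℝ)
    (x : EuclideanSpace ℝ (Fin d)) : ℝ := ∑ i, pderiv' i (pderiv' i f) x

/-- Langevin Stein operator `L_p f = Δf + ∇log p · ∇f`. -/
def steinOp {d : ℕ} (p f : EuclideanSpace ℝ (Fin d) → ℝ)
    (x : EuclideanSpace ℝ (Fin d)) : ℝ :=
  laplacian' f x + ∑ i, pderiv' i (fun y => Real.log (p y)) x * pderiv' i f x

lemma pderivContDiff {d : ℕ} {f : EuclideanSpace ℝ (Fin d) → ℝ} (hf : ContDiff ℝ 2 f) (i : Fin d) :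
    ContDiff ℝ 1 (pderiv' i f) := by
  have h1 : ContDiff ℝ 1 (fderiv ℝ f) := hf.fderiv_right (by norm_num)
  exact (ContinuousLinearMap.apply ℝ ℝ (basisVec i)).contDiff.comp h1

lemma div_eq_stein {d : ℕ} {p f : EuclideanSpace ℝ (Fin d) → ℝ}
    (hp_pos : ∀ x, 0 < p x) (hp : ContDiff ℝ 1 p) (hf : ContDiff ℝ 2 f)
    (x : EuclideanSpace ℝ (Fin d)) :
    ∑ i, fderiv ℝ (fun z => p z * pderiv' i f z) x (basisVec i) = steinOp p f x * p x := by
  have hpd : DifferentiableAt ℝ p x := (hp.differentiable one_ne_zero).differentiableAt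
  have hgd : ∀ i : Fin d, DifferentiableAt ℝ (pderiv' i f) x := fun i =>
    ((pderivContDiff hf i).differentiable one_ne_zero).differentiableAt
  have hlog : ∀ i : Fin d, pderiv' i (fun y => Real.log (p y)) x
      = (p x)⁻¹ * fderiv ℝ p x (basisVec i) := by
    intro i
    have h : HasFDerivAt (fun y => Real.log (p y)) ((p x)⁻¹ • fderiv ℝ p x) x :=
      (Real.hasDerivAt_log (hp_pos x).ne').comp_hasFDerivAt x hpd.hasFDerivAt
    simp [pderiv', h.fderiv]
  have hmul : ∀ i : Fin d, fderiv ℝ (fun z => p z * pderiv' i f z) x (basisVec i)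
      = p x * fderiv ℝ (pderiv' i f) x (basisVec i)
        + pderiv' i f x * fderiv ℝ p x (basisVec i) := by
    intro i
    rw [fderiv_fun_mul hpd (hgd i)]
    simp
  rw [Finset.sum_congr rfl (fun i _ => hmul i), steinOp, laplacian']
  simp only [hlog]
  rw [Finset.sum_add_distrib, add_mul, Finset.sum_mul, Finset.sum_mul]
  congr 1
  · exact Finset.sum_congr rfl fun i _ => mul_comm _ _
  · refine Finset.sum_congr rfl fun i _ => ?_
    have := (hp_pos x).ne'
    unfold pderiv'
    field_simp

/-- identity continuous linear equivalence between Pi space and Euclidean space -/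
def toE (n : ℕ) : (Fin (n+1) → ℝ) ≃L[ℝ] EuclideanSpace ℝ (Fin (n+1)) :=
  (EuclideanSpace.equiv (Fin (n+1)) ℝ).symm

lemma exists_large_of_lintegral_lt_top {H : ℝ → ℝ≥0∞} (hmeas : Measurable H)
    (hfin : ∫⁻ x, H x ≠ ⊤) {ε : ℝ} (hε : 0 < ε) (M : ℝ) :
    ∃ R, M ≤ R ∧ 0 ≤ R ∧ H R ≤ ENNReal.ofReal ε := by
  by_contra hcon
  push_neg at hcon
  have h1 : ∀ R ∈ Set.Ici (max M 0), ENNReal.ofReal ε ≤ H R := fun R hR =>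
    (hcon R (le_trans (le_max_left _ _) hR) (le_trans (le_max_right _ _) hR)).le
  have h2 : (⊤ : ℝ≥0∞) ≤ ∫⁻ x in Set.Ici (max M 0), H x := by
    calc (⊤ : ℝ≥0∞) = ENNReal.ofReal ε * volume (Set.Ici (max M 0)) := by
          rw [Real.volume_Ici, ENNReal.mul_top (ENNReal.ofReal_pos.mpr hε).ne']
      _ = ∫⁻ _ in Set.Ici (max M 0), ENNReal.ofReal ε := (setLIntegral_const _ _).symm
      _ ≤ _ := setLIntegral_mono hmeas h1
  exact hfin (top_le_iff.mp (le_trans h2 (setLIntegral_le_lintegral _ _)))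

/-- **Stein identity** for the Langevin Stein operator: if the vector field `p·∇f`
is integrable, its flux over spheres of radius `R` vanishes as `R → ∞`, and
`L_p f` is integrable under `p`, then `E_{X∼p}[L_p f(X)] = 0`. -/
theorem stein_identity {d : ℕ}
    (p : EuclideanSpace ℝ (Fin d) → ℝ)
    (hp_pos : ∀ x, 0 < p x)
    (hp_smooth : ContDiff ℝ 1 p)
    (hp_prob : ∫ x, p x = 1)
    (f : EuclideanSpace ℝ (Fin d) → ℝ)
    (hf : ContDiff ℝ 2 f)
    -- the vector field `p ∇f` is integrable
    (h_int : ∀ i, Integrable (fun x => p x * pderiv' i f x))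
    -- flux of `p ∇f` through the sphere of radius `R` (outward normal `x/R`) vanishes
    (h_flux : Tendsto
      (fun R : ℝ =>
        ∫ x in Metric.sphere (0 : EuclideanSpace ℝ (Fin d)) R,
          p x * (∑ i, pderiv' i f x * (R⁻¹ * x i)) ∂(μH[(d : ℝ) - 1]))
      atTop (nhds 0))
    -- `L_p f` is integrable under `p`
    (h_int_stein : Integrable (fun x => steinOp p f x * p x)) :
    ∫ x, steinOp p f x * p x = 0 := by
  rcases d with _ | n
  · have h0 : ∀ x : EuclideanSpace ℝ (Fin 0), steinOp p f x * p x = 0 := by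
      intro x; simp [steinOp, laplacian']
    simp only [h0]
    exact integral_zero _ _
  -- notation
  set D : EuclideanSpace ℝ (Fin (n+1)) → ℝ := fun x => steinOp p f x * p x with hD
  set W : Fin (n+1) → (Fin (n+1) → ℝ) → ℝ :=
    fun i y => p (toE n y) * pderiv' i f (toE n y) with hWdef
  set W' : Fin (n+1) → (Fin (n+1) → ℝ) → ((Fin (n+1) → ℝ) →L[ℝ] ℝ) :=
    fun i y => (fderiv ℝ (fun z => p z * pderiv' i f z) (toE n y)).comp
      ((toE n) : (Fin (n+1) → ℝ) →L[ℝ] _) with hW'def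
  have hVdiff : ∀ i : Fin (n+1), Differentiable ℝ (fun z => p z * pderiv' i f z) :=
    fun i => (hp_smooth.differentiable one_ne_zero).mul ((pderivContDiff hf i).differentiable one_ne_zero)
  have hWd : ∀ i y, HasFDerivAt (W i) (W' i y) y := fun i y =>
    (((hVdiff i) _).hasFDerivAt).comp y ((toE n).hasFDerivAt)
  have hkey : ∀ y, ∑ i, W' i y (Pi.single i 1) = D (toE n y) := by
    intro y
    have h1 : ∀ i : Fin (n+1), W' i y (Pi.single i 1)
        = fderiv ℝ (fun z => p z * pderiv' i f z) (toE n y) (basisVec i) := fun i => rfl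
    rw [Finset.sum_congr rfl fun i _ => h1 i]
    exact div_eq_stein hp_pos hp_smooth hf _
  have hWcont : ∀ i, Continuous (W i) := fun i =>
    ((hVdiff i).continuous).comp (toE n).continuous
  have hmp := (EuclideanSpace.volume_preserving_symm_measurableEquiv_toLp (Fin (n+1))).symm
      (MeasurableEquiv.toLp 2 (Fin (n+1) → ℝ)).symm
  have hemb := (MeasurableEquiv.toLp 2 (Fin (n+1) → ℝ)).symm.symm.measurableEmbedding
  have hWint : ∀ i, Integrable (W i) := fun i =>
    (hmp.integrable_comp_emb hemb).mpr (h_int i)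
  have hDPi_int : Integrable (fun y : Fin (n+1) → ℝ => D (toE n y)) :=
    (hmp.integrable_comp_emb hemb).mpr h_int_stein
  have htrans : ∫ x, D x = ∫ y : Fin (n+1) → ℝ, D (toE n y) :=
    (hmp.integral_comp' D).symm
  rw [show (∫ x, steinOp p f x * p x) = ∫ x, D x from rfl, htrans]
  -- divergence theorem on boxes
  have hdiv : ∀ R : ℝ, 0 ≤ R →
      (∫ y in Set.Icc (fun _ : Fin (n+1) => -R) (fun _ : Fin (n+1) => R), D (toE n y))
      = ∑ i : Fin (n+1),
          ((∫ x in Set.Icc ((fun _ : Fin (n+1) => -R) ∘ i.succAbove)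
              ((fun _ : Fin (n+1) => R) ∘ i.succAbove), W i (i.insertNth R x))
          - ∫ x in Set.Icc ((fun _ : Fin (n+1) => -R) ∘ i.succAbove)
              ((fun _ : Fin (n+1) => R) ∘ i.succAbove), W i (i.insertNth (-R) x)) := by
    intro R hR
    have hle : (fun _ : Fin (n+1) => -R) ≤ fun _ : Fin (n+1) => R := fun i => by
      simp only; linarith
    have heq : (fun x : Fin (n+1) → ℝ => ∑ i, W' i x (Pi.single i 1))
        = fun y => D (toE n y) := funext hkey
    have := integral_divergence_of_hasFDerivAt_off_countable
      (fun _ : Fin (n+1) => -R) (fun _ : Fin (n+1) => R) hle (fun x i => W i x)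
      (fun x => ContinuousLinearMap.pi fun i => W' i x) ∅ Set.countable_empty
      (continuousOn_pi.2 fun i => (hWcont i).continuousOn)
      (fun x _ => hasFDerivAt_pi.2 fun i => hWd i x)
      (by rw [show (fun x : Fin (n+1) → ℝ =>
            ∑ i, (ContinuousLinearMap.pi fun j => W' j x) (Pi.single i 1) i)
            = fun y => D (toE n y) from funext fun y => hkey y]
          exact hDPi_int.integrableOn)
    rw [show (fun x : Fin (n+1) → ℝ =>
          ∑ i, (ContinuousLinearMap.pi fun j => W' j x) (Pi.single i 1) i)
          = fun y => D (toE n y) from funext fun y => hkey y] at this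
    exact this
  -- the boundary control function
  set G : Fin (n+1) → ℝ → ℝ≥0∞ :=
    fun i t => ∫⁻ y : Fin n → ℝ, ‖W i (i.insertNth t y)‖₊ with hGdef
  have hGmeas : ∀ i, Measurable (G i) := by
    intro i
    exact Measurable.lintegral_prod_right'
      (((hWcont i).measurable.comp
        (MeasurableEquiv.piFinSuccAbove (fun _ => ℝ) i).symm.measurable).nnnorm.coe_nnreal_ennreal)
  have hGint : ∀ i, ∫⁻ t, G i t = ∫⁻ x, (‖W i x‖₊ : ℝ≥0∞) := by
    intro i
    rw [← ((volume_preserving_piFinSuccAbove (fun _ : Fin (n+1) => ℝ) i).symm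
        (MeasurableEquiv.piFinSuccAbove (fun _ => ℝ) i)).lintegral_comp_emb
        (MeasurableEquiv.piFinSuccAbove (fun _ => ℝ) i).symm.measurableEmbedding
        (fun x => (‖W i x‖₊ : ℝ≥0∞))]
    rw [Measure.volume_eq_prod, lintegral_prod]
    · rfl
    · exact (((hWcont i).measurable.comp
        (MeasurableEquiv.piFinSuccAbove (fun _ => ℝ) i).symm.measurable).nnnorm.coe_nnreal_ennreal).aemeasurable
  have hWfin : ∀ i, ∫⁻ x, (‖W i x‖₊ : ℝ≥0∞) < ⊤ := fun i => (hWint i).2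
  set H : ℝ → ℝ≥0∞ := fun R => ∑ i, (G i R + G i (-R)) with hHdef
  have hHmeas : Measurable H := by
    apply Finset.measurable_sum
    intro i _
    exact (hGmeas i).add ((hGmeas i).comp measurable_neg)
  have hHfin : ∫⁻ R, H R ≠ ⊤ := by
    simp only [hHdef]
    rw [lintegral_finset_sum (f := fun i t => G i t + G i (-t)) Finset.univ
      (fun i _ => (hGmeas i).add ((hGmeas i).comp measurable_neg))]
    refine (ENNReal.sum_lt_top.mpr fun i _ => ?_).ne
    rw [lintegral_add_left (hGmeas i)]
    have hneg : ∫⁻ R, G i (-R) = ∫⁻ t, G i t :=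
      (Measure.measurePreserving_neg (volume : Measure ℝ)).lintegral_comp (hGmeas i)
    rw [hneg, hGint i]
    exact ENNReal.add_lt_top.mpr ⟨hWfin i, hWfin i⟩
  -- monotone box exhaustion
  have hmono : Monotone (fun R : ℝ =>
      Set.Icc (fun _ : Fin (n+1) => -R) (fun _ : Fin (n+1) => R)) := by
    intro R1 R2 h x hx
    exact ⟨fun i => le_trans (neg_le_neg h) (hx.1 i), fun i => le_trans (hx.2 i) h⟩
  have hunion : (⋃ R : ℝ, Set.Icc (fun _ : Fin (n+1) => -R) (fun _ : Fin (n+1) => R))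
      = Set.univ := by
    ext x
    simp only [Set.mem_iUnion, Set.mem_univ, iff_true, Set.mem_Icc]
    refine ⟨‖x‖, fun i => ?_, fun i => ?_⟩
    · have := abs_le.mp ((Real.norm_eq_abs (x i)) ▸ norm_le_pi_norm x i)
      exact this.1
    · have := abs_le.mp ((Real.norm_eq_abs (x i)) ▸ norm_le_pi_norm x i)
      exact this.2
  have htendsto : Tendsto
      (fun R : ℝ => ∫ y in Set.Icc (fun _ : Fin (n+1) => -R) (fun _ : Fin (n+1) => R),
        D (toE n y)) atTop (𝓝 (∫ y : Fin (n+1) → ℝ, D (toE n y))) := by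
    have := tendsto_setIntegral_of_monotone (fun R : ℝ => measurableSet_Icc) hmono
      (by rw [hunion]; exact hDPi_int.integrableOn)
    rwa [hunion, setIntegral_univ] at this
  -- final bound
  have hIabs : ∀ ε : ℝ, 0 < ε → |∫ y : Fin (n+1) → ℝ, D (toE n y)| ≤ 2 * ε := by
    intro ε hε
    obtain ⟨M, hM⟩ := (Metric.tendsto_atTop.mp htendsto ε hε)
    obtain ⟨R, hMR, hR0, hHR⟩ := exists_large_of_lintegral_lt_top hHmeas hHfin hε M
    have hterm : ∀ i : Fin (n+1), G i R + G i (-R) ≤ H R := by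
      intro i
      simp only [hHdef]
      exact Finset.single_le_sum (f := fun j => G j R + G j (-R))
        (fun j _ => zero_le) (mem_univ i)
    have hGfinR : ∀ i : Fin (n+1), G i R ≠ ⊤ := fun i =>
      ne_top_of_le_ne_top (ne_top_of_le_ne_top (by simp) hHR)
        (le_trans le_self_add (hterm i))
    have hGfinR' : ∀ i : Fin (n+1), G i (-R) ≠ ⊤ := fun i =>
      ne_top_of_le_ne_top (ne_top_of_le_ne_top (by simp) hHR)
        (le_trans le_add_self (hterm i))
    have hface : ∀ (i : Fin (n+1)) (t : ℝ), G i t ≠ ⊤ →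
        |∫ x in Set.Icc ((fun _ : Fin (n+1) => -R) ∘ i.succAbove)
            ((fun _ : Fin (n+1) => R) ∘ i.succAbove), W i (i.insertNth t x)| ≤ (G i t).toReal := by
      intro i t hfin
      have h1 := norm_integral_le_lintegral_norm
        (μ := volume.restrict (Set.Icc ((fun _ : Fin (n+1) => -R) ∘ i.succAbove)
          ((fun _ : Fin (n+1) => R) ∘ i.succAbove)))
        (f := fun x => W i (i.insertNth t x))
      rw [Real.norm_eq_abs] at h1
      refine le_trans h1 ?_
      refine ENNReal.toReal_mono hfin ?_
      refine le_trans (setLIntegral_le_lintegral _ _) ?_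
      refine le_of_eq ?_
      congr 1
      ext x
      rw [ofReal_norm, enorm_eq_nnnorm]
    have hbound : |∫ y in Set.Icc (fun _ : Fin (n+1) => -R) (fun _ : Fin (n+1) => R),
        D (toE n y)| ≤ ε := by
      rw [hdiv R hR0]
      calc |∑ i : Fin (n+1), ((∫ x in Set.Icc ((fun _ : Fin (n+1) => -R) ∘ i.succAbove)
              ((fun _ : Fin (n+1) => R) ∘ i.succAbove), W i (i.insertNth R x))
            - ∫ x in Set.Icc ((fun _ : Fin (n+1) => -R) ∘ i.succAbove)
              ((fun _ : Fin (n+1) => R) ∘ i.succAbove), W i (i.insertNth (-R) x))|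
          ≤ ∑ i : Fin (n+1), ((G i R).toReal + (G i (-R)).toReal) := by
            refine le_trans (Finset.abs_sum_le_sum_abs _ _) (Finset.sum_le_sum fun i _ => ?_)
            refine le_trans (abs_sub _ _) ?_
            exact add_le_add (hface i R (hGfinR i)) (hface i (-R) (hGfinR' i))
        _ = (H R).toReal := by
            rw [hHdef]
            rw [ENNReal.toReal_sum (fun i _ =>
              (ENNReal.add_lt_top.mpr ⟨(hGfinR i).lt_top, (hGfinR' i).lt_top⟩).ne)]
            exact (Finset.sum_congr rfl fun i _ =>
              (ENNReal.toReal_add (hGfinR i) (hGfinR' i)).symm).symm ▸ rfl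
        _ ≤ ε := ENNReal.toReal_le_of_le_ofReal hε.le hHR
    have hdist := hM R hMR
    rw [Real.dist_eq] at hdist
    calc |∫ y : Fin (n+1) → ℝ, D (toE n y)|
        ≤ |(∫ y in Set.Icc (fun _ : Fin (n+1) => -R) (fun _ : Fin (n+1) => R), D (toE n y))
            - ∫ y : Fin (n+1) → ℝ, D (toE n y)|
          + |∫ y in Set.Icc (fun _ : Fin (n+1) => -R) (fun _ : Fin (n+1) => R), D (toE n y)| := by
            calc |∫ y : Fin (n+1) → ℝ, D (toE n y)|
                = |((∫ y : Fin (n+1) → ℝ, D (toE n y))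
                    - (∫ y in Set.Icc (fun _ : Fin (n+1) => -R) (fun _ : Fin (n+1) => R),
                        D (toE n y)))
                  + ∫ y in Set.Icc (fun _ : Fin (n+1) => -R) (fun _ : Fin (n+1) => R),
                        D (toE n y)| := by rw [sub_add_cancel]
              _ ≤ _ := by rw [abs_sub_comm]; exact abs_add_le _ _
        _ ≤ ε + ε := add_le_add hdist.le hbound
        _ = 2 * ε := by ring
  have : |∫ y : Fin (n+1) → ℝ, D (toE n y)| ≤ 0 := by
    refine le_of_forall_pos_le_add fun ε hε => ?_
    have := hIabs (ε / 2) (by linarith)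
    linarith
  exact abs_nonpos_iff.mp this
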